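/- In the hardmax platform game with N = 2 platforms and M models, let i ≠ j be two models. The profile (i, j) is a pure Nash equilibrium if and only if: T_i + δ_{ij} ≥ T_j; T_i + δ_{ij} ≥ T_k + δ_{kj} for every model k ≠ j; T_j + δ_{ji} ≥ T_i; and T_j + δ_{ji} ≥ T_k + δ_{ki} for every model k ≠ i. -/

import Mathlib

open Finset

noncomputable section

/-- `𝔸_f(θ)`: the set of platforms attaining the maximal score for user type `θ`
under the strategy profile `f`. -/
def attains {Θ : Type*} [Fintype Θ] {M N : ℕ} (S : Fin M → Θ → ℝ)
    (f : Fin N → Fin M) (θ : Θ) : Finset (Fin N) :=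
  Finset.univ.filter fun i => ∀ k : Fin N, S (f k) θ ≤ S (f i) θ

/-- Hardmax user-choice probability `p_i(θ; f)`. -/
def hardP {Θ : Type*} [Fintype Θ] {M N : ℕ} (S : Fin M → Θ → ℝ)
    (f : Fin N → Fin M) (θ : Θ) (i : Fin N) : ℝ :=
  if i ∈ attains S f θ then 1 / (attains S f θ).card else 0

/-- Platform `i`'s utility `U_i(f)` in the hardmax platform game. -/
def util {Θ : Type*} [Fintype Θ] {M N : ℕ} (π : Θ → ℝ) (S : Fin M → Θ → ℝ)
    (f : Fin N → Fin M) (i : Fin N) : ℝ :=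
  ∑ θ, π θ * hardP S f θ i * S (f i) θ

/-- Pure Nash equilibrium of the hardmax platform game: no platform can
improve its utility by unilaterally deviating. -/
def IsPNE {Θ : Type*} [Fintype Θ] {M N : ℕ} (π : Θ → ℝ) (S : Fin M → Θ → ℝ)
    (f : Fin N → Fin M) : Prop :=
  ∀ (i : Fin N) (m : Fin M), util π S (Function.update f i m) i ≤ util π S f i

/-- Average score `T_j` of model `j`. -/
def avgT {Θ : Type*} [Fintype Θ] {M : ℕ} (π : Θ → ℝ) (S : Fin M → Θ → ℝ)
    (j : Fin M) : ℝ :=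
  ∑ θ, π θ * S j θ

/-- Pairwise attraction term `Z_{ij}(θ)` for two models `i`, `j`. -/
def Zpair {Θ : Type*} {M : ℕ} (S : Fin M → Θ → ℝ) (i j : Fin M) (θ : Θ) : ℝ :=
  if S j θ < S i θ then S i θ
  else if S i θ < S j θ then -S i θ
  else 0

/-- Pairwise deviation advantage `δ_{ij}`. -/
def devPair {Θ : Type*} [Fintype Θ] {M : ℕ} (π : Θ → ℝ) (S : Fin M → Θ → ℝ)
    (i j : Fin M) : ℝ :=
  ∑ θ, π θ * Zpair S i j θ

/-- with two platforms and `i ≠ j`, the profile `(i, j)` is a PNE iff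
`T_i + δ_{ij} ≥ T_j`, `T_i + δ_{ij} ≥ T_k + δ_{kj}` for all `k ≠ j`,
`T_j + δ_{ji} ≥ T_i`, and `T_j + δ_{ji} ≥ T_k + δ_{ki}` for all `k ≠ i`. -/
lemma attains_two {Θ : Type*} [Fintype Θ] {M : ℕ} (S : Fin M → Θ → ℝ)
    (a b : Fin M) (θ : Θ) :
    attains S ![a, b] θ =
      if S b θ < S a θ then {0}
      else if S a θ < S b θ then {1} else Finset.univ := by
  unfold attains
  rcases lt_trichotomy (S a θ) (S b θ) with h|h|h
  · rw [if_neg (not_lt.mpr h.le), if_pos h]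
    ext x; fin_cases x <;>
      simp [Fin.forall_fin_two, h, h.le, not_lt.mpr h.le, not_le.mpr h]
  · rw [if_neg (not_lt.mpr h.le), if_neg (not_lt.mpr h.ge)]
    ext x; fin_cases x <;> simp [Fin.forall_fin_two, h.le, h.ge]
  · rw [if_pos h]
    ext x; fin_cases x <;>
      simp [Fin.forall_fin_two, h.le, not_le.mpr h]

lemma hardP_zero {Θ : Type*} [Fintype Θ] {M : ℕ} (S : Fin M → Θ → ℝ)
    (a b : Fin M) (θ : Θ) :
    hardP S ![a, b] θ 0 =
      if S b θ < S a θ then 1 else if S a θ < S b θ then 0 else 1/2 := by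
  rw [hardP, attains_two]
  rcases lt_trichotomy (S a θ) (S b θ) with h|h|h
  · simp [h, not_lt.mpr h.le]
  · simp [not_lt.mpr h.le, not_lt.mpr h.ge]
  · simp [h, not_lt.mpr h.le]

lemma hardP_one {Θ : Type*} [Fintype Θ] {M : ℕ} (S : Fin M → Θ → ℝ)
    (a b : Fin M) (θ : Θ) :
    hardP S ![a, b] θ 1 =
      if S a θ < S b θ then 1 else if S b θ < S a θ then 0 else 1/2 := by
  rw [hardP, attains_two]
  rcases lt_trichotomy (S a θ) (S b θ) with h|h|h
  · simp [h, not_lt.mpr h.le]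
  · simp [not_lt.mpr h.le, not_lt.mpr h.ge]
  · simp [h, not_lt.mpr h.le]

lemma util_zero {Θ : Type*} [Fintype Θ] {M : ℕ} (π : Θ → ℝ) (S : Fin M → Θ → ℝ)
    (a b : Fin M) :
    util π S ![a, b] 0 = (avgT π S a + devPair π S a b) / 2 := by
  unfold util avgT devPair
  rw [← Finset.sum_add_distrib, Finset.sum_div]
  refine Finset.sum_congr rfl fun θ _ => ?_
  rw [hardP_zero]
  simp only [Matrix.cons_val_zero, Zpair]
  rcases lt_trichotomy (S a θ) (S b θ) with h|h|h
  · rw [if_neg (not_lt.mpr h.le), if_pos h, if_neg (not_lt.mpr h.le), if_pos h]; ring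
  · rw [if_neg (not_lt.mpr h.le), if_neg (not_lt.mpr h.ge),
      if_neg (not_lt.mpr h.le), if_neg (not_lt.mpr h.ge)]; ring
  · rw [if_pos h, if_pos h]; ring

lemma util_one {Θ : Type*} [Fintype Θ] {M : ℕ} (π : Θ → ℝ) (S : Fin M → Θ → ℝ)
    (a b : Fin M) :
    util π S ![a, b] 1 = (avgT π S b + devPair π S b a) / 2 := by
  unfold util avgT devPair
  rw [← Finset.sum_add_distrib, Finset.sum_div]
  refine Finset.sum_congr rfl fun θ _ => ?_
  rw [hardP_one]
  simp only [Matrix.cons_val_one, Matrix.head_cons, Matrix.cons_val_zero, Zpair]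
  rcases lt_trichotomy (S a θ) (S b θ) with h|h|h
  · rw [if_pos h, if_pos h]; ring
  · rw [if_neg (not_lt.mpr h.le), if_neg (not_lt.mpr h.ge),
      if_neg (not_lt.mpr h.ge), if_neg (not_lt.mpr h.le)]; ring
  · rw [if_neg (asymm h), if_pos h, if_neg (asymm h), if_pos h]; ring

lemma update_zero {M : ℕ} (a b m : Fin M) :
    Function.update ![a, b] (0 : Fin 2) m = ![m, b] := by
  funext x; fin_cases x <;> simp [Function.update]

lemma update_one {M : ℕ} (a b m : Fin M) :
    Function.update ![a, b] (1 : Fin 2) m = ![a, m] := by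
  funext x; fin_cases x <;> simp [Function.update]

lemma devPair_self {Θ : Type*} [Fintype Θ] {M : ℕ} (π : Θ → ℝ)
    (S : Fin M → Θ → ℝ) (j : Fin M) : devPair π S j j = 0 := by
  simp [devPair, Zpair]

theorem stmt10 {Θ : Type*} [Fintype Θ] [Nonempty Θ] {M : ℕ}
    (hM : 1 ≤ M)
    (π : Θ → ℝ) (hπ0 : ∀ θ, 0 ≤ π θ) (hπ1 : ∑ θ, π θ = 1)
    (S : Fin M → Θ → ℝ) (i j : Fin M) (hij : i ≠ j) :
    IsPNE π S ![i, j] ↔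
      (avgT π S j ≤ avgT π S i + devPair π S i j ∧
       (∀ k : Fin M, k ≠ j → avgT π S k + devPair π S k j ≤ avgT π S i + devPair π S i j) ∧
       avgT π S i ≤ avgT π S j + devPair π S j i ∧
       (∀ k : Fin M, k ≠ i → avgT π S k + devPair π S k i ≤ avgT π S j + devPair π S j i)) := by
  have key : IsPNE π S ![i, j] ↔
      (∀ m : Fin M, avgT π S m + devPair π S m j ≤ avgT π S i + devPair π S i j) ∧
      (∀ m : Fin M, avgT π S m + devPair π S m i ≤ avgT π S j + devPair π S j i) := by
    constructor
    · intro h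
      refine ⟨fun m => ?_, fun m => ?_⟩
      · have := h 0 m
        rw [update_zero, util_zero, util_zero] at this
        linarith
      · have := h 1 m
        rw [update_one, util_one, util_one] at this
        linarith
    · rintro ⟨h0, h1⟩ x m
      fin_cases x
      · show util π S (Function.update ![i, j] 0 m) 0 ≤ util π S ![i, j] 0
        rw [update_zero, util_zero, util_zero]
        linarith [h0 m]
      · show util π S (Function.update ![i, j] 1 m) 1 ≤ util π S ![i, j] 1
        rw [update_one, util_one, util_one]
        linarith [h1 m]
  rw [key]
  constructor
  · rintro ⟨h0, h1⟩
    refine ⟨?_, fun k _ => h0 k, ?_, fun k _ => h1 k⟩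
    · have := h0 j; rwa [devPair_self, add_zero] at this
    · have := h1 i; rwa [devPair_self, add_zero] at this
  · rintro ⟨ha, hb, hc, hd⟩
    refine ⟨fun m => ?_, fun m => ?_⟩
    · by_cases hm : m = j
      · subst hm; rw [devPair_self, add_zero]; exact ha
      · exact hb m hm
    · by_cases hm : m = i
      · subst hm; rw [devPair_self, add_zero]; exact hc
      · exact hd m hm
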